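/- Let t be the Thue–Morse word (fixed point of h: 0↦01, 1↦10 starting with 0), let f be a non-erasing binary morphism with f(0)=0, and let w = f(t). Then every factor u of w is a factor of f(v) for some factor v of t with |v| ≤ (2/(|f(1)|+1))·(|u| + 3|f(1)| − 3). -/

import Mathlib

def IsFactor {α : Type*} (u : List α) (w : ℕ → α) : Prop :=
  ∃ i, u = (List.range u.length).map fun j => w (i + j)

/-- The Thue–Morse word: `tm n` is the parity of the binary digit sum of `n`. -/
def tm : ℕ → Fin 2 := fun n => if (Nat.digits 2 n).sum % 2 = 0 then 0 else 1

/-- The length-`n` prefix of the Thue–Morse word. -/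
def tmPrefix (n : ℕ) : List (Fin 2) := (List.range n).map tm

/-- window of `tm` -/
def W (i L : ℕ) : List (Fin 2) := (List.range L).map fun j => tm (i + j)

lemma W_length (i L : ℕ) : (W i L).length = L := by simp [W]

lemma W_append (i a b : ℕ) : W i (a + b) = W i a ++ W (i + a) b := by
  unfold W
  rw [List.range_add, List.map_append, List.map_map]
  refine congrArg _ (List.map_congr_left fun x _ => ?_)
  simp only [Function.comp_apply]
  congr 1
  omega

lemma tm_pair (c : ℕ) : tm (2 * c + 1) ≠ tm (2 * c) := by
  have h1 : (Nat.digits 2 (2 * c + 1)).sum = (Nat.digits 2 c).sum + 1 := by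
    rw [Nat.digits_def' (by norm_num : 1 < 2) (by omega)]
    rw [show (2 * c + 1) % 2 = 1 from by omega, show (2 * c + 1) / 2 = c from by omega]
    simp [Nat.add_comm]
  have h0 : (Nat.digits 2 (2 * c)).sum = (Nat.digits 2 c).sum := by
    rcases Nat.eq_zero_or_pos c with rfl | hc
    · simp
    · rw [Nat.digits_def' (by norm_num : 1 < 2) (by omega)]
      rw [show (2 * c) % 2 = 0 from by omega, show (2 * c) / 2 = c from by omega]
      simp
  unfold tm
  rw [h0, h1]
  rcases Nat.mod_two_eq_zero_or_one (Nat.digits 2 c).sum with h | h <;>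
    simp [h, Nat.add_mod] <;> omega

lemma count_two {a b x : Fin 2} (h : a ≠ b) : List.count x [a, b] = 1 := by
  revert h; revert a b x; decide

lemma W_pair_count (c : ℕ) (x : Fin 2) : (W (2 * c) 2).count x = 1 := by
  have : W (2 * c) 2 = [tm (2 * c), tm (2 * c + 1)] := by
    simp [W, List.range_succ]
  rw [this]
  exact count_two (fun h => tm_pair c h.symm)

lemma W_aligned (x : Fin 2) : ∀ m c, (W (2 * c) (2 * m)).count x = m := by
  intro m
  induction m with
  | zero => intro c; simp [W]
  | succ m ih =>
    intro c
    have h : 2 * (m + 1) = 2 + 2 * m := by omega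
    rw [h, W_append, List.count_append, W_pair_count]
    have h2 : 2 * c + 2 = 2 * (c + 1) := by omega
    rw [h2, ih]
    omega

lemma W_half (x : Fin 2) (c L : ℕ) : L / 2 ≤ (W (2 * c) L).count x := by
  calc L / 2 = (W (2 * c) (2 * (L / 2))).count x := (W_aligned x _ c).symm
    _ ≤ (W (2 * c) (2 * (L / 2)) ++ W (2 * c + 2 * (L / 2)) (L - 2 * (L / 2))).count x := by
        rw [List.count_append]; exact Nat.le_add_right _ _
    _ = (W (2 * c) L).count x := by
        rw [← W_append, show 2 * (L / 2) + (L - 2 * (L / 2)) = L from by omega]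

lemma W_count (x : Fin 2) (i L : ℕ) : L ≤ 2 * (W i L).count x + 2 := by
  obtain ⟨c, hc | hc⟩ : ∃ c, i = 2 * c ∨ i = 2 * c + 1 := ⟨i / 2, by omega⟩
  · subst hc
    have := W_half x c L
    omega
  · rcases Nat.eq_zero_or_pos L with rfl | hL
    · simp
    · have h : W i L = W i 1 ++ W (i + 1) (L - 1) := by
        rw [← W_append]; congr 1; omega
      rw [h, List.count_append]
      have h2 : i + 1 = 2 * (c + 1) := by omega
      rw [h2]
      have := W_half x (c + 1) (L - 1)
      omega

lemma split_append {α} {A B C D : List α} (h : A ++ B = C ++ D)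
    (hlen : C.length ≤ A.length) : ∃ E, A = C ++ E ∧ D = E ++ B := by
  have h1 : A.take C.length = C := by
    have := congrArg (fun l => List.take C.length l) h
    simpa [List.take_append_of_le_length hlen, List.take_left] using this
  refine ⟨A.drop C.length, ?_, ?_⟩
  · conv_lhs => rw [← List.take_append_drop C.length A]
    rw [h1]
  · have h2 : C ++ D = C ++ (A.drop C.length ++ B) := by
      rw [← h]
      conv_lhs => rw [← List.take_append_drop C.length A]
      rw [h1, List.append_assoc]
    exact List.append_cancel_left h2

section trim
variable (f : Fin 2 → List (Fin 2)) (k : ℕ)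
  (hk : ∀ c, 1 ≤ (f c).length ∧ (f c).length ≤ k)
  (u : List (Fin 2)) (hu : u ≠ [])

include hk hu in
lemma trimLeft : ∀ w s t, w.flatMap f = s ++ u ++ t →
    ∃ v s', v <:+ w ∧ v.flatMap f = s' ++ u ++ t ∧ s'.length + 1 ≤ k := by
  intro w
  induction w with
  | nil =>
    intro s t h
    simp at h
    exact absurd h.2.1 hu
  | cons c w ih =>
    intro s t h
    rcases le_or_gt (f c).length s.length with hle | hlt
    · have h' : s ++ (u ++ t) = f c ++ w.flatMap f := by
        simpa [List.append_assoc] using h.symm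
      obtain ⟨E, hE1, hE2⟩ := split_append h' hle
      obtain ⟨v, s', hv1, hv2, hv3⟩ := ih E t (by rw [hE2, List.append_assoc])
      exact ⟨v, s', hv1.trans (List.suffix_cons c w), hv2, hv3⟩
    · exact ⟨c :: w, s, List.suffix_refl _, h, by
        have := (hk c).2; omega⟩

include hk hu in
lemma trimRight : ∀ w s t, w.flatMap f = s ++ u ++ t →
    ∃ v t', v <+: w ∧ v.flatMap f = s ++ u ++ t' ∧ t'.length + 1 ≤ k := by
  intro w
  induction w using List.reverseRecOn with
  | nil =>
    intro s t h
    simp at h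
    exact absurd h.2.1 hu
  | append_singleton w c ih =>
    intro s t h
    rcases le_or_gt (f c).length t.length with hle | hlt
    · have h' : w.flatMap f ++ f c = (s ++ u) ++ t := by
        simpa [List.append_assoc] using h
      have hlen : (s ++ u).length ≤ (w.flatMap f).length := by
        have := congrArg List.length h'
        simp at this ⊢
        omega
      obtain ⟨E, hE1, hE2⟩ := split_append h' hlen
      obtain ⟨v, t', hv1, hv2, hv3⟩ := ih s E (by rw [hE1, List.append_assoc])
      exact ⟨v, t', hv1.trans (List.prefix_append w [c]), hv2, hv3⟩
    · exact ⟨w ++ [c], t, List.prefix_refl _, h, by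
        have := (hk c).2; omega⟩

include hk hu in
lemma trim (w s t : List (Fin 2)) (h : w.flatMap f = s ++ u ++ t) :
    ∃ v s' t', v <:+: w ∧ v.flatMap f = s' ++ u ++ t' ∧
      s'.length + 1 ≤ k ∧ t'.length + 1 ≤ k := by
  obtain ⟨v₁, s', hv1, hv2, hv3⟩ := trimLeft f k hk u hu w s t h
  obtain ⟨v₂, t', hw1, hw2, hw3⟩ := trimRight f k hk u hu v₁ s' t hv2
  exact ⟨v₂, s', t', hw1.isInfix.trans hv1.isInfix, hw2, hv3, hw3⟩
end trim

lemma infix_W {v : List (Fin 2)} {n : ℕ} (h : v <:+: W 0 n) :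
    ∃ i, v = W i v.length := by
  obtain ⟨s, t, hst⟩ := h
  refine ⟨s.length, ?_⟩
  have hlen : s.length + v.length + t.length = n := by
    have := congrArg List.length hst
    simp [W_length] at this
    omega
  apply List.ext_getElem (by simp [W_length])
  intro j hj hj'
  have hjn : s.length + j < n := by omega
  have h1 : (W 0 n)[s.length + j]? = some (tm (s.length + j)) := by
    simp [W, hjn]
  rw [← hst, List.append_assoc,
    List.getElem?_append_right (Nat.le_add_right _ _)] at h1
  simp only [Nat.add_sub_cancel_left] at h1
  rw [List.getElem?_append_left hj, List.getElem?_eq_getElem hj] at h1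
  have h3 : v[j] = tm (s.length + j) := Option.some.inj h1
  simpa [W] using h3

lemma count01 (l : List (Fin 2)) : l.count 0 + l.count 1 = l.length := by
  induction l with
  | nil => simp
  | cons a l ih =>
    fin_cases a <;> simp [List.count_cons] <;> omega

lemma bindLen (f : Fin 2 → List (Fin 2)) (l : List (Fin 2)) :
    (l.flatMap f).length = l.count 0 * (f 0).length + l.count 1 * (f 1).length := by
  induction l with
  | nil => simp
  | cons a l ih =>
    fin_cases a <;> simp [List.count_cons, ih] <;> ring

lemma tmPrefix_eq_W (n : ℕ) : tmPrefix n = W 0 n := by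
  simp [tmPrefix, W]

/-- Bounding Lemma: if `f` is a non-erasing binary morphism with `f(0) = 0` and
`w = f(t)`, then every factor `u` of `w` is a factor of `f(v)` for some factor
`v` of `t` with `|v| ≤ (2/(|f(1)|+1))·(|u| + 3|f(1)| − 3)`. -/
theorem stmt12 (f : Fin 2 → List (Fin 2)) (hf0 : f 0 = [0]) (hf1 : f 1 ≠ [])
    (u : List (Fin 2)) (hu : ∃ n, u <:+: (tmPrefix n).flatMap f) :
    ∃ v : List (Fin 2), IsFactor v tm ∧ u <:+: v.flatMap f ∧
      (v.length : ℚ) ≤ 2 / ((f 1).length + 1) *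
        ((u.length : ℚ) + 3 * (f 1).length - 3) := by
  set k := (f 1).length with hkdef
  have hk1 : 1 ≤ k := List.length_pos_iff.mpr hf1
  have hkQ : (1 : ℚ) ≤ (k : ℚ) := by exact_mod_cast hk1
  rcases eq_or_ne u [] with rfl | hune
  · refine ⟨[], ⟨0, by simp⟩, List.infix_refl _, ?_⟩
    simp only [List.length_nil, Nat.cast_zero]
    apply mul_nonneg (by positivity)
    linarith
  · obtain ⟨n, hn⟩ := hu
    obtain ⟨s, t, hst⟩ := hn
    have hfc : ∀ c : Fin 2, 1 ≤ (f c).length ∧ (f c).length ≤ k := by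
      intro c
      fin_cases c
      · simp [hf0]; omega
      · exact ⟨hk1, le_refl _⟩
    obtain ⟨v, s', t', hvinf, hveq, hs', ht'⟩ :=
      trim f k hfc u hune (tmPrefix n) s t hst.symm
    rw [tmPrefix_eq_W] at hvinf
    obtain ⟨i, hvW⟩ := infix_W hvinf
    refine ⟨v, ⟨i, hvW⟩, ⟨s', t', hveq.symm⟩, ?_⟩
    set a := v.count 0 with hadef
    set b := v.count 1 with hbdef
    have hab : a + b = v.length := count01 v
    have hbl : (v.flatMap f).length = a * 1 + b * k := by
      rw [bindLen f v, hf0]; rfl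
    have hlen2 : (v.flatMap f).length = s'.length + u.length + t'.length := by
      rw [hveq]; simp; omega
    have hmain : a + b * k + 2 ≤ u.length + 2 * k := by omega
    have hca : v.length ≤ 2 * a + 2 := by
      have := W_count 0 i v.length
      rw [← hvW] at this
      omega
    have hcb : v.length ≤ 2 * b + 2 := by
      have := W_count 1 i v.length
      rw [← hvW] at this
      omega
    rw [div_mul_eq_mul_div, le_div_iff₀ (by positivity)]
    have c1 : (a : ℚ) + (b : ℚ) * k + 2 ≤ (u.length : ℚ) + 2 * k := by
      exact_mod_cast hmain
    have c2 : (a : ℚ) + (b : ℚ) = (v.length : ℚ) := by exact_mod_cast hab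
    have c3 : (v.length : ℚ) ≤ 2 * b + 2 := by exact_mod_cast hcb
    have hprod : ((k : ℚ) - 1) * ((a : ℚ) - b) ≤ ((k : ℚ) - 1) * 2 :=
      mul_le_mul_of_nonneg_left (by linarith) (by linarith)
    have hid : (v.length : ℚ) * ((k : ℚ) + 1) =
        2 * ((a : ℚ) + (b : ℚ) * k) + ((k : ℚ) - 1) * ((a : ℚ) - b) := by
      rw [← c2]; ring
    linarith
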